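/- (Neyman orthogonality of the AR-type LATE score.) Fix θ₀ ∈ ℝ. Let η = (g, m, p) be a nuisance parameter with ε ≤ p(X) ≤ 1 − ε a.s., and suppose Y ∈ L²(P), g₀(1,X), g₀(0,X) ∈ L²(P), and g(z,X) − g₀(z,X), m(z,X) − m₀(z,X) (for z ∈ {0,1}) and p(X) − p₀(X) all lie in L²(P). Then the map r ↦ E_P[ψ(W; θ₀, η₀ + r(η − η₀))], defined for r ∈ [0,1), is differentiable at r = 0 with derivative equal to 0; that is, the Gateaux derivative ∂_η E_P[ψ(W; θ₀, η₀)][η − η₀] vanishes. -/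

import Mathlib

open MeasureTheory

lemma myIntMul {Ω : Type*} [MeasurableSpace Ω] {P : Measure Ω} {f g : Ω → ℝ}
    (hf : MemLp f 2 P) (hg : MemLp g 2 P) : Integrable (fun ω => f ω * g ω) P := by
  have h := L2.integrable_inner (𝕜 := ℝ) (hf.toLp f) (hg.toLp g)
  refine h.congr ?_
  filter_upwards [hf.coeFn_toLp, hg.coeFn_toLp] with ω h1 h2
  simp [h1, h2, RCLike.inner_apply, mul_comm]

lemma myTower {Ω β : Type*} [MeasurableSpace Ω] [MeasurableSpace β]
    (P : Measure Ω) [IsProbabilityMeasure P] {V : Ω → β} (hV : Measurable V)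
    {f : β → ℝ} (hf : Measurable f) {g h : Ω → ℝ}
    (hg : Integrable g P) (hfg : Integrable (fun ω => f (V ω) * g ω) P)
    (hc : P[g | MeasurableSpace.comap V inferInstance] =ᵐ[P] h) :
    ∫ ω, f (V ω) * g ω ∂P = ∫ ω, f (V ω) * h ω ∂P := by
  have hm : MeasurableSpace.comap V inferInstance ≤ (inferInstance : MeasurableSpace Ω) :=
    hV.comap_le
  have hVm : Measurable[MeasurableSpace.comap V inferInstance] V := Measurable.of_comap_le le_rfl
  have hsm : StronglyMeasurable[MeasurableSpace.comap V inferInstance] (fun ω => f (V ω)) :=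
    (hf.comp hVm).stronglyMeasurable
  have h1 : ∫ ω, f (V ω) * g ω ∂P
      = ∫ ω, (P[(fun ω => f (V ω)) * g | MeasurableSpace.comap V inferInstance]) ω ∂P := by
    rw [integral_condExp hm]; rfl
  rw [h1, integral_congr_ae (condExp_mul_of_stronglyMeasurable_left hsm hfg hg)]
  exact integral_congr_ae (by filter_upwards [hc] with ω hω; simp [hω])

lemma myTrunc {Ω : Type*} [MeasurableSpace Ω] (P : Measure Ω) [IsProbabilityMeasure P]
    {k : Ω → ℝ} (hk : Measurable k) (hk0 : ∀ ω, 0 ≤ k ω) (C : ℝ)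
    (hC : ∀ n : ℕ, ∫ ω, min (k ω) n ∂P ≤ C) : Integrable k P := by
  have h1 : ∀ n : ℕ, ∫⁻ ω, ENNReal.ofReal (min (k ω) n) ∂P ≤ ENNReal.ofReal C := by
    intro n
    have hmin : Integrable (fun ω => min (k ω) n) P := by
      refine (integrable_const (n : ℝ)).mono' ((hk.min measurable_const).aestronglyMeasurable) ?_
      refine Filter.Eventually.of_forall fun ω => ?_
      rw [Real.norm_eq_abs, abs_of_nonneg (le_min (hk0 ω) (Nat.cast_nonneg n))]
      exact min_le_right _ _
    rw [← ofReal_integral_eq_lintegral_ofReal hmin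
      (Filter.Eventually.of_forall fun ω => le_min (hk0 ω) (Nat.cast_nonneg n))]
    exact ENNReal.ofReal_le_ofReal (hC n)
  have h2 : ∫⁻ ω, ENNReal.ofReal (k ω) ∂P ≤ ENNReal.ofReal C := by
    have heq : ∀ ω, ENNReal.ofReal (k ω) = ⨆ n : ℕ, ENNReal.ofReal (min (k ω) n) := by
      intro ω
      refine le_antisymm ?_ (iSup_le fun n => ENNReal.ofReal_le_ofReal (min_le_left _ _))
      have : ENNReal.ofReal (min (k ω) (⌈k ω⌉₊ : ℕ)) = ENNReal.ofReal (k ω) := by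
        rw [min_eq_left (Nat.le_ceil _)]
      exact this ▸ le_iSup (fun n : ℕ => ENNReal.ofReal (min (k ω) n)) ⌈k ω⌉₊
    calc ∫⁻ ω, ENNReal.ofReal (k ω) ∂P
        = ∫⁻ ω, ⨆ n : ℕ, ENNReal.ofReal (min (k ω) n) ∂P := lintegral_congr heq
      _ = ⨆ n : ℕ, ∫⁻ ω, ENNReal.ofReal (min (k ω) n) ∂P := by
          refine lintegral_iSup (fun n => (hk.min measurable_const).ennreal_ofReal) ?_
          intro n m hnm ω
          exact ENNReal.ofReal_le_ofReal (min_le_min le_rfl (Nat.cast_le.mpr hnm))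
      _ ≤ ENNReal.ofReal C := iSup_le h1
  refine ⟨hk.aestronglyMeasurable, ?_⟩
  rw [hasFiniteIntegral_iff_norm]
  calc ∫⁻ ω, ENNReal.ofReal ‖k ω‖ ∂P = ∫⁻ ω, ENNReal.ofReal (k ω) ∂P :=
        lintegral_congr fun ω => by rw [Real.norm_eq_abs, abs_of_nonneg (hk0 ω)]
    _ ≤ ENNReal.ofReal C := h2
    _ < ⊤ := ENNReal.ofReal_lt_top

set_option maxHeartbeats 2000000

/-- Neyman orthogonality of the AR-type LATE score: Fix `θ₀ ∈ ℝ`. For a nuisance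
parameter `η = (g, m, p)` with `ε ≤ p(X) ≤ 1 − ε` a.s., `Y ∈ L²(P)`,
`g₀(1,X), g₀(0,X) ∈ L²(P)`, and `g(z,X) − g₀(z,X)`, `m(z,X) − m₀(z,X)` (for `z ∈ {0,1}`) and
`p(X) − p₀(X)` all in `L²(P)`, the map `r ↦ E_P[ψ(W; θ₀, η₀ + r(η − η₀))]`, defined for
`r ∈ [0,1)`, is differentiable at `r = 0` with derivative `0`. -/
theorem stmt2
    {Ω 𝒳 : Type*} [MeasurableSpace Ω] [MeasurableSpace 𝒳]
    (P : Measure Ω) [IsProbabilityMeasure P]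
    (Y D Z : Ω → ℝ) (X : Ω → 𝒳)
    (hYm : Measurable Y) (hDm : Measurable D) (hZm : Measurable Z) (hXm : Measurable X)
    (hDval : ∀ ω, D ω = 0 ∨ D ω = 1) (hZval : ∀ ω, Z ω = 0 ∨ Z ω = 1)
    -- the true nuisance parameter η₀ = (g₀, m₀, p₀)
    (g0 m0 : ℝ → 𝒳 → ℝ) (p0 : 𝒳 → ℝ)
    (hg0m : Measurable (Function.uncurry g0)) (hm0m : Measurable (Function.uncurry m0))
    (hp0m : Measurable p0)
    (hp0val : ∀ x, 0 < p0 x ∧ p0 x < 1)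
    (hcY : P[Y | MeasurableSpace.comap (fun ω => (Z ω, X ω)) inferInstance]
        =ᵐ[P] fun ω => g0 (Z ω) (X ω))
    (hcD : P[D | MeasurableSpace.comap (fun ω => (Z ω, X ω)) inferInstance]
        =ᵐ[P] fun ω => m0 (Z ω) (X ω))
    (hcZ : P[Z | MeasurableSpace.comap X inferInstance] =ᵐ[P] fun ω => p0 (X ω))
    (ε : ℝ) (hε : ε ∈ Set.Ioo (0 : ℝ) (1 / 2))
    (hp0bd : ∀ᵐ ω ∂P, ε ≤ p0 (X ω) ∧ p0 (X ω) ≤ 1 - ε)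
    -- the perturbation direction nuisance parameter η = (g, m, p)
    (g m : ℝ → 𝒳 → ℝ) (p : 𝒳 → ℝ)
    (hgm : Measurable (Function.uncurry g)) (hmm : Measurable (Function.uncurry m))
    (hpm : Measurable p)
    (hpval : ∀ x, 0 < p x ∧ p x < 1)
    (hpbd : ∀ᵐ ω ∂P, ε ≤ p (X ω) ∧ p (X ω) ≤ 1 - ε)
    -- square-integrability hypotheses
    (θ0 : ℝ)
    (hY2 : MemLp Y 2 P)
    (hg01 : MemLp (fun ω => g0 1 (X ω)) 2 P)
    (hg00 : MemLp (fun ω => g0 0 (X ω)) 2 P)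
    (hgd1 : MemLp (fun ω => g 1 (X ω) - g0 1 (X ω)) 2 P)
    (hgd0 : MemLp (fun ω => g 0 (X ω) - g0 0 (X ω)) 2 P)
    (hmd1 : MemLp (fun ω => m 1 (X ω) - m0 1 (X ω)) 2 P)
    (hmd0 : MemLp (fun ω => m 0 (X ω) - m0 0 (X ω)) 2 P)
    (hpd : MemLp (fun ω => p (X ω) - p0 (X ω)) 2 P)
    -- the map r ↦ E_P[ψ(W; θ₀, η₀ + r(η − η₀))]
    (F : ℝ → ℝ)
    (hF : ∀ r, F r =
      ∫ ω,
        ((g0 1 (X ω) + r * (g 1 (X ω) - g0 1 (X ω)))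
          - (g0 0 (X ω) + r * (g 0 (X ω) - g0 0 (X ω)))
          + Z ω * (Y ω - (g0 1 (X ω) + r * (g 1 (X ω) - g0 1 (X ω))))
              / (p0 (X ω) + r * (p (X ω) - p0 (X ω)))
          - (1 - Z ω) * (Y ω - (g0 0 (X ω) + r * (g 0 (X ω) - g0 0 (X ω))))
              / (1 - (p0 (X ω) + r * (p (X ω) - p0 (X ω))))
          - θ0 * ((m0 1 (X ω) + r * (m 1 (X ω) - m0 1 (X ω)))
              - (m0 0 (X ω) + r * (m 0 (X ω) - m0 0 (X ω)))
              + Z ω * (D ω - (m0 1 (X ω) + r * (m 1 (X ω) - m0 1 (X ω))))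
                  / (p0 (X ω) + r * (p (X ω) - p0 (X ω)))
              - (1 - Z ω) * (D ω - (m0 0 (X ω) + r * (m 0 (X ω) - m0 0 (X ω))))
                  / (1 - (p0 (X ω) + r * (p (X ω) - p0 (X ω)))))) ∂P) :
    HasDerivWithinAt F 0 (Set.Ico (0 : ℝ) 1) 0 := by
  obtain ⟨hε0, hεhalf⟩ := hε
  -- basic measurability on 𝒳
  have hg1x : Measurable fun x => g 1 x := hgm.comp measurable_prodMk_left
  have hg0x : Measurable fun x => g 0 x := hgm.comp measurable_prodMk_left
  have hg01x : Measurable fun x => g0 1 x := hg0m.comp measurable_prodMk_left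
  have hg00x : Measurable fun x => g0 0 x := hg0m.comp measurable_prodMk_left
  have hmm1x : Measurable fun x => m 1 x := hmm.comp measurable_prodMk_left
  have hmm0x : Measurable fun x => m 0 x := hmm.comp measurable_prodMk_left
  have hm01x : Measurable fun x => m0 1 x := hm0m.comp measurable_prodMk_left
  have hm00x : Measurable fun x => m0 0 x := hm0m.comp measurable_prodMk_left
  -- measurability on Ω
  have hp0Xm : Measurable fun ω => p0 (X ω) := hp0m.comp hXm
  have h1p0Xm : Measurable fun ω => 1 - p0 (X ω) := measurable_const.sub hp0Xm
  have hqm : Measurable fun ω => (p (X ω) - p0 (X ω)) := (hpm.comp hXm).sub (hp0m.comp hXm)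
  have hPRm : ∀ r : ℝ, Measurable fun ω => (p0 (X ω) + r * (p (X ω) - p0 (X ω))) :=
    fun r => (hp0m.comp hXm).add (hqm.const_mul r)
  have hc1m : Measurable fun ω => (g 1 (X ω) - g0 1 (X ω) - θ0 * (m 1 (X ω) - m0 1 (X ω))) :=
    (((hg1x.comp hXm).sub (hg01x.comp hXm)).sub
      (((hmm1x.comp hXm).sub (hm01x.comp hXm)).const_mul θ0))
  have hc0m : Measurable fun ω => (g 0 (X ω) - g0 0 (X ω) - θ0 * (m 0 (X ω) - m0 0 (X ω))) :=
    (((hg0x.comp hXm).sub (hg00x.comp hXm)).sub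
      (((hmm0x.comp hXm).sub (hm00x.comp hXm)).const_mul θ0))
  -- bounds on Z
  have habsZ : ∀ ω, ‖Z ω‖ ≤ 1 := fun ω => by rcases hZval ω with h|h <;> simp [h]
  have habs1Z : ∀ ω, ‖1 - Z ω‖ ≤ 1 := fun ω => by rcases hZval ω with h|h <;> simp [h]
  -- basic integrability
  have hYi : Integrable Y P := hY2.integrable one_le_two
  have hZi : Integrable Z P :=
    (integrable_const (1:ℝ)).mono' hZm.aestronglyMeasurable (.of_forall habsZ)
  have hDi : Integrable D P := by
    refine (integrable_const (1:ℝ)).mono' hDm.aestronglyMeasurable (.of_forall fun ω => ?_)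
    rcases hDval ω with h|h <;> simp [h]
  have h1Zi : Integrable (fun ω => 1 - Z ω) P := (integrable_const 1).sub hZi
  have hg01i : Integrable (fun ω => g0 1 (X ω)) P := hg01.integrable one_le_two
  have hg00i : Integrable (fun ω => g0 0 (X ω)) P := hg00.integrable one_le_two
  have hg0ZXi : Integrable (fun ω => g0 (Z ω) (X ω)) P := by
    have he : (fun ω => g0 (Z ω) (X ω))
        = fun ω => Z ω * g0 1 (X ω) + (1 - Z ω) * g0 0 (X ω) :=
      funext fun ω => by rcases hZval ω with h|h <;> rw [h] <;> norm_num
    rw [he]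
    exact (hg01i.bdd_mul hZm.aestronglyMeasurable (.of_forall habsZ)).add
      (hg00i.bdd_mul (measurable_const.sub hZm).aestronglyMeasurable (.of_forall habs1Z))
  have hm0ZXi : Integrable (fun ω => m0 (Z ω) (X ω)) P := integrable_condExp.congr hcD
  have hui : Integrable (fun ω => (Y ω - g0 (Z ω) (X ω))) P := hYi.sub hg0ZXi
  have hvi : Integrable (fun ω => (D ω - m0 (Z ω) (X ω))) P := hDi.sub hm0ZXi
  have huvi : Integrable (fun ω => ((Y ω - g0 (Z ω) (X ω)) - θ0 * (D ω - m0 (Z ω) (X ω)))) P := hui.sub (hvi.const_mul θ0)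
  have hc1i : Integrable (fun ω => (g 1 (X ω) - g0 1 (X ω) - θ0 * (m 1 (X ω) - m0 1 (X ω)))) P :=
    (hgd1.integrable one_le_two).sub ((hmd1.integrable one_le_two).const_mul θ0)
  have hc0i : Integrable (fun ω => (g 0 (X ω) - g0 0 (X ω) - θ0 * (m 0 (X ω) - m0 0 (X ω)))) P :=
    (hgd0.integrable one_le_two).sub ((hmd0.integrable one_le_two).const_mul θ0)
  have hc1sq : MemLp (fun ω => (g 1 (X ω) - g0 1 (X ω) - θ0 * (m 1 (X ω) - m0 1 (X ω)))) 2 P := hgd1.sub (hmd1.const_mul θ0)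
  have hc0sq : MemLp (fun ω => (g 0 (X ω) - g0 0 (X ω) - θ0 * (m 0 (X ω) - m0 0 (X ω)))) 2 P := hgd0.sub (hmd0.const_mul θ0)
  have hQc1i : Integrable (fun ω => (p (X ω) - p0 (X ω)) * (g 1 (X ω) - g0 1 (X ω) - θ0 * (m 1 (X ω) - m0 1 (X ω)))) P := myIntMul hpd hc1sq
  have hQc0i : Integrable (fun ω => (p (X ω) - p0 (X ω)) * (g 0 (X ω) - g0 0 (X ω) - θ0 * (m 0 (X ω) - m0 0 (X ω)))) P := myIntMul hpd hc0sq
  -- integrability of m0 1 (X ω), m0 0 (X ω)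
  have hm01i : Integrable (fun ω => m0 1 (X ω)) P := by
    have habs : Integrable (fun ω => |m0 1 (X ω)|) P := by
      refine myTrunc P ((hm01x.comp hXm).abs) (fun ω => abs_nonneg _)
        ((∫ ω, |m0 (Z ω) (X ω)| ∂P) / ε) (fun n => ?_)
      have hknm : Measurable fun x => min |m0 1 x| (n : ℝ) := hm01x.abs.min measurable_const
      have hknbd : ∀ ω, ‖min |m0 1 (X ω)| (n : ℝ)‖ ≤ (n : ℝ) := fun ω => by
        rw [Real.norm_eq_abs, abs_of_nonneg (le_min (abs_nonneg _) (Nat.cast_nonneg n))]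
        exact min_le_right _ _
      have hknXi : Integrable (fun ω => min |m0 1 (X ω)| (n : ℝ)) P :=
        (integrable_const (n:ℝ)).mono' ((hknm.comp hXm).aestronglyMeasurable) (.of_forall hknbd)
      have hknZi : Integrable (fun ω => min |m0 1 (X ω)| (n:ℝ) * Z ω) P :=
        hZi.bdd_mul ((hknm.comp hXm).aestronglyMeasurable) (.of_forall hknbd)
      have ht := myTower P hXm hknm hZi hknZi hcZ
      have h1 : ε * ∫ ω, min |m0 1 (X ω)| (n:ℝ) ∂P
          ≤ ∫ ω, min |m0 1 (X ω)| (n:ℝ) * p0 (X ω) ∂P := by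
        rw [← integral_const_mul]
        refine integral_mono_ae (hknXi.const_mul ε) ?_ ?_
        · refine (hknXi.bdd_mul (c := 1) (hp0Xm.aestronglyMeasurable)
            (.of_forall fun ω => ?_)).congr (.of_forall fun ω => by ring)
          rw [Real.norm_eq_abs, abs_of_nonneg (hp0val _).1.le]
          exact (hp0val _).2.le
        · filter_upwards [hp0bd] with ω h
          have h0 : 0 ≤ min |m0 1 (X ω)| (n:ℝ) := le_min (abs_nonneg _) (Nat.cast_nonneg n)
          nlinarith [h.1]
      have h2 : ∫ ω, min |m0 1 (X ω)| (n:ℝ) * Z ω ∂P ≤ ∫ ω, |m0 (Z ω) (X ω)| ∂P := by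
        refine integral_mono hknZi hm0ZXi.abs fun ω => ?_
        rcases hZval ω with h|h <;> rw [h]
        · simpa using abs_nonneg (m0 (0:ℝ) (X ω))
        · rw [mul_one]; exact min_le_left _ _
      rw [le_div_iff₀ hε0, mul_comm]
      linarith [h1, h2, ht]
    exact (integrable_norm_iff ((hm01x.comp hXm)).aestronglyMeasurable).mp
      (by simpa [Real.norm_eq_abs] using habs)
  -- conditional expectation of 1 - Z
  have hcZ' : P[(fun ω => 1 - Z ω) | MeasurableSpace.comap X inferInstance]
      =ᵐ[P] fun ω => 1 - p0 (X ω) := by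
    have h2 : P[(fun _ : Ω => (1:ℝ)) | MeasurableSpace.comap X inferInstance]
        = fun _ => (1:ℝ) := condExp_const hXm.comap_le 1
    exact (condExp_sub (integrable_const 1) hZi _).trans
      (by rw [h2]; filter_upwards [hcZ] with ω e; simp [e])
  have hm00i : Integrable (fun ω => m0 0 (X ω)) P := by
    have habs : Integrable (fun ω => |m0 0 (X ω)|) P := by
      refine myTrunc P ((hm00x.comp hXm).abs) (fun ω => abs_nonneg _)
        ((∫ ω, |m0 (Z ω) (X ω)| ∂P) / ε) (fun n => ?_)
      have hknm : Measurable fun x => min |m0 0 x| (n : ℝ) := hm00x.abs.min measurable_const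
      have hknbd : ∀ ω, ‖min |m0 0 (X ω)| (n : ℝ)‖ ≤ (n : ℝ) := fun ω => by
        rw [Real.norm_eq_abs, abs_of_nonneg (le_min (abs_nonneg _) (Nat.cast_nonneg n))]
        exact min_le_right _ _
      have hknXi : Integrable (fun ω => min |m0 0 (X ω)| (n : ℝ)) P :=
        (integrable_const (n:ℝ)).mono' ((hknm.comp hXm).aestronglyMeasurable) (.of_forall hknbd)
      have hknZi : Integrable (fun ω => min |m0 0 (X ω)| (n:ℝ) * (1 - Z ω)) P :=
        h1Zi.bdd_mul ((hknm.comp hXm).aestronglyMeasurable) (.of_forall hknbd)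
      have ht := myTower P hXm hknm h1Zi hknZi hcZ'
      have h1 : ε * ∫ ω, min |m0 0 (X ω)| (n:ℝ) ∂P
          ≤ ∫ ω, min |m0 0 (X ω)| (n:ℝ) * (1 - p0 (X ω)) ∂P := by
        rw [← integral_const_mul]
        refine integral_mono_ae (hknXi.const_mul ε) ?_ ?_
        · refine (hknXi.bdd_mul (c := 1) (h1p0Xm.aestronglyMeasurable)
            (.of_forall fun ω => ?_)).congr (.of_forall fun ω => by ring)
          rw [Real.norm_eq_abs, abs_of_nonneg (by linarith [(hp0val (X ω)).2] : (0:ℝ) ≤ 1 - p0 (X ω))]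
          linarith [(hp0val (X ω)).1]
        · filter_upwards [hp0bd] with ω h
          have h0 : 0 ≤ min |m0 0 (X ω)| (n:ℝ) := le_min (abs_nonneg _) (Nat.cast_nonneg n)
          nlinarith [h.2]
      have h2 : ∫ ω, min |m0 0 (X ω)| (n:ℝ) * (1 - Z ω) ∂P ≤ ∫ ω, |m0 (Z ω) (X ω)| ∂P := by
        refine integral_mono hknZi hm0ZXi.abs fun ω => ?_
        rcases hZval ω with h|h <;> rw [h]
        · rw [sub_zero, mul_one]; exact min_le_left _ _
        · simpa using abs_nonneg (m0 (1:ℝ) (X ω))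
      rw [le_div_iff₀ hε0, mul_comm]
      linarith [h1, h2, ht]
    exact (integrable_norm_iff ((hm00x.comp hXm)).aestronglyMeasurable).mp
      (by simpa [Real.norm_eq_abs] using habs)
  -- conditional expectations vanish: u, v
  have hmle := (hZm.prodMk hXm).comap_le
  have hVZX : Measurable[MeasurableSpace.comap (fun ω => (Z ω, X ω)) inferInstance]
      fun ω => (Z ω, X ω) := Measurable.of_comap_le le_rfl
  have hcu : P[(fun ω => (Y ω - g0 (Z ω) (X ω))) | MeasurableSpace.comap (fun ω => (Z ω, X ω)) inferInstance]
      =ᵐ[P] fun _ => (0:ℝ) := by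
    have h2 : P[(fun ω => g0 (Z ω) (X ω)) |
        MeasurableSpace.comap (fun ω => (Z ω, X ω)) inferInstance]
        = fun ω => g0 (Z ω) (X ω) :=
      condExp_of_stronglyMeasurable hmle ((hg0m.comp hVZX).stronglyMeasurable) hg0ZXi
    exact (condExp_sub hYi hg0ZXi _).trans
      (by rw [h2]; filter_upwards [hcY] with ω e; simp [e])
  have hcv : P[(fun ω => (D ω - m0 (Z ω) (X ω))) | MeasurableSpace.comap (fun ω => (Z ω, X ω)) inferInstance]
      =ᵐ[P] fun _ => (0:ℝ) := by
    have h2 : P[(fun ω => m0 (Z ω) (X ω)) |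
        MeasurableSpace.comap (fun ω => (Z ω, X ω)) inferInstance]
        = fun ω => m0 (Z ω) (X ω) :=
      condExp_of_stronglyMeasurable hmle ((hm0m.comp hVZX).stronglyMeasurable) hm0ZXi
    exact (condExp_sub hDi hm0ZXi _).trans
      (by rw [h2]; filter_upwards [hcD] with ω e; simp [e])
  have hcuv : P[(fun ω => ((Y ω - g0 (Z ω) (X ω)) - θ0 * (D ω - m0 (Z ω) (X ω)))) | MeasurableSpace.comap (fun ω => (Z ω, X ω)) inferInstance]
      =ᵐ[P] fun _ => (0:ℝ) := by
    have hb : P[(fun ω => θ0 * (D ω - m0 (Z ω) (X ω))) |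
        MeasurableSpace.comap (fun ω => (Z ω, X ω)) inferInstance]
        =ᵐ[P] fun ω => θ0 * (P[(fun ω => (D ω - m0 (Z ω) (X ω))) |
          MeasurableSpace.comap (fun ω => (Z ω, X ω)) inferInstance]) ω :=
      condExp_smul θ0 _ _
    exact (condExp_sub hui (hvi.const_mul θ0) _).trans
      (by filter_upwards [hcu, hcv, hb] with ω e1 e2 e3; simp [Pi.sub_apply, e1, e3, e2])
  -- the key formula
  have key : ∀ r ∈ Set.Ico (0:ℝ) 1, ∃ E : ℝ, |E| ≤ (1/ε * ((∫ ω, |(p (X ω) - p0 (X ω)) * (g 1 (X ω) - g0 1 (X ω) - θ0 * (m 1 (X ω) - m0 1 (X ω)))| ∂P) + (∫ ω, |(p (X ω) - p0 (X ω)) * (g 0 (X ω) - g0 0 (X ω) - θ0 * (m 0 (X ω) - m0 0 (X ω)))| ∂P))) ∧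
      F r = (∫ ω, (g0 1 (X ω) - g0 0 (X ω) - θ0 * (m0 1 (X ω) - m0 0 (X ω))) ∂P) + r^2 * E := by
    rintro r ⟨hr0, hr1⟩
    have hPRbd : ∀ᵐ ω ∂P, ε ≤ (p0 (X ω) + r * (p (X ω) - p0 (X ω))) ∧ (p0 (X ω) + r * (p (X ω) - p0 (X ω))) ≤ 1 - ε := by
      filter_upwards [hp0bd, hpbd] with ω h1 h2
      constructor <;> nlinarith [h1.1, h1.2, h2.1, h2.2]
    have hW1bd : ∀ᵐ ω ∂P, ‖Z ω / (p0 (X ω) + r * (p (X ω) - p0 (X ω)))‖ ≤ 1/ε := by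
      filter_upwards [hPRbd] with ω h
      rw [norm_div, Real.norm_eq_abs, Real.norm_eq_abs,
        abs_of_nonneg (by linarith [h.1] : (0:ℝ) ≤ (p0 (X ω) + r * (p (X ω) - p0 (X ω))))]
      refine div_le_div₀ (by norm_num) ?_ hε0 h.1
      have := habsZ ω; rwa [Real.norm_eq_abs] at this
    have hW2bd : ∀ᵐ ω ∂P, ‖(1 - Z ω) / (1 - (p0 (X ω) + r * (p (X ω) - p0 (X ω))))‖ ≤ 1/ε := by
      filter_upwards [hPRbd] with ω h
      rw [norm_div, Real.norm_eq_abs, Real.norm_eq_abs,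
        abs_of_nonneg (by linarith [h.2] : (0:ℝ) ≤ 1 - (p0 (X ω) + r * (p (X ω) - p0 (X ω))))]
      refine div_le_div₀ (by norm_num) ?_ hε0 (by linarith [h.2])
      have := habs1Z ω; rwa [Real.norm_eq_abs] at this
    -- integrabilities with weights
    have h3 : Integrable (fun ω => (Z ω / (p0 (X ω) + r * (p (X ω) - p0 (X ω)))) * ((Y ω - g0 (Z ω) (X ω)) - θ0 * (D ω - m0 (Z ω) (X ω)))) P :=
      huvi.bdd_mul ((hZm.div (hPRm r)).aestronglyMeasurable) hW1bd
    have h4 : Integrable (fun ω => ((1 - Z ω) / (1 - (p0 (X ω) + r * (p (X ω) - p0 (X ω))))) * ((Y ω - g0 (Z ω) (X ω)) - θ0 * (D ω - m0 (Z ω) (X ω)))) P :=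
      huvi.bdd_mul (((measurable_const.sub hZm).div
        (measurable_const.sub (hPRm r))).aestronglyMeasurable) hW2bd
    have h5' : Integrable (fun ω => (Z ω / (p0 (X ω) + r * (p (X ω) - p0 (X ω)))) * (g 1 (X ω) - g0 1 (X ω) - θ0 * (m 1 (X ω) - m0 1 (X ω)))) P :=
      hc1i.bdd_mul ((hZm.div (hPRm r)).aestronglyMeasurable) hW1bd
    have h6' : Integrable (fun ω => ((1 - Z ω) / (1 - (p0 (X ω) + r * (p (X ω) - p0 (X ω))))) * (g 0 (X ω) - g0 0 (X ω) - θ0 * (m 0 (X ω) - m0 0 (X ω)))) P :=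
      hc0i.bdd_mul (((measurable_const.sub hZm).div
        (measurable_const.sub (hPRm r))).aestronglyMeasurable) hW2bd
    have h5 : Integrable (fun ω => r * ((Z ω / (p0 (X ω) + r * (p (X ω) - p0 (X ω)))) * (g 1 (X ω) - g0 1 (X ω) - θ0 * (m 1 (X ω) - m0 1 (X ω))))) P := h5'.const_mul r
    have h6 : Integrable (fun ω => r * (((1 - Z ω) / (1 - (p0 (X ω) + r * (p (X ω) - p0 (X ω))))) * (g 0 (X ω) - g0 0 (X ω) - θ0 * (m 0 (X ω) - m0 0 (X ω))))) P := h6'.const_mul r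
    have h1 : Integrable (fun ω => (g0 1 (X ω) - g0 0 (X ω) - θ0 * (m0 1 (X ω) - m0 0 (X ω)))) P :=
      (hg01i.sub hg00i).sub ((hm01i.sub hm00i).const_mul θ0)
    have h2 : Integrable (fun ω => r * ((g 1 (X ω) - g0 1 (X ω) - θ0 * (m 1 (X ω) - m0 1 (X ω))) - (g 0 (X ω) - g0 0 (X ω) - θ0 * (m 0 (X ω) - m0 0 (X ω))))) P := (hc1i.sub hc0i).const_mul r
    have hQc1PRi : Integrable (fun ω => (p (X ω) - p0 (X ω)) * (g 1 (X ω) - g0 1 (X ω) - θ0 * (m 1 (X ω) - m0 1 (X ω))) / (p0 (X ω) + r * (p (X ω) - p0 (X ω)))) P := by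
      refine (hQc1i.abs.const_mul (1/ε)).mono'
        (((hqm.mul hc1m).div (hPRm r)).aestronglyMeasurable) ?_
      filter_upwards [hPRbd] with ω h
      rw [Real.norm_eq_abs, abs_div, abs_of_nonneg (by linarith [h.1] : (0:ℝ) ≤ (p0 (X ω) + r * (p (X ω) - p0 (X ω))))]
      calc |(p (X ω) - p0 (X ω)) * (g 1 (X ω) - g0 1 (X ω) - θ0 * (m 1 (X ω) - m0 1 (X ω)))| / (p0 (X ω) + r * (p (X ω) - p0 (X ω))) ≤ |(p (X ω) - p0 (X ω)) * (g 1 (X ω) - g0 1 (X ω) - θ0 * (m 1 (X ω) - m0 1 (X ω)))| / ε :=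
            div_le_div_of_nonneg_left (abs_nonneg _) hε0 h.1
        _ = 1/ε * |(p (X ω) - p0 (X ω)) * (g 1 (X ω) - g0 1 (X ω) - θ0 * (m 1 (X ω) - m0 1 (X ω)))| := by ring
    have hQc0PRi : Integrable (fun ω => (p (X ω) - p0 (X ω)) * (g 0 (X ω) - g0 0 (X ω) - θ0 * (m 0 (X ω) - m0 0 (X ω))) / (1 - (p0 (X ω) + r * (p (X ω) - p0 (X ω))))) P := by
      refine (hQc0i.abs.const_mul (1/ε)).mono'
        (((hqm.mul hc0m).div (measurable_const.sub (hPRm r))).aestronglyMeasurable) ?_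
      filter_upwards [hPRbd] with ω h
      rw [Real.norm_eq_abs, abs_div, abs_of_nonneg (by linarith [h.2] : (0:ℝ) ≤ 1 - (p0 (X ω) + r * (p (X ω) - p0 (X ω))))]
      calc |(p (X ω) - p0 (X ω)) * (g 0 (X ω) - g0 0 (X ω) - θ0 * (m 0 (X ω) - m0 0 (X ω)))| / (1 - (p0 (X ω) + r * (p (X ω) - p0 (X ω)))) ≤ |(p (X ω) - p0 (X ω)) * (g 0 (X ω) - g0 0 (X ω) - θ0 * (m 0 (X ω) - m0 0 (X ω)))| / ε :=
            div_le_div_of_nonneg_left (abs_nonneg _) hε0 (by linarith [h.2])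
        _ = 1/ε * |(p (X ω) - p0 (X ω)) * (g 0 (X ω) - g0 0 (X ω) - θ0 * (m 0 (X ω) - m0 0 (X ω)))| := by ring
    -- towers for u, v
    have hφ1m : Measurable fun zx : ℝ × 𝒳 => zx.1 / (p0 zx.2 + r * (p zx.2 - p0 zx.2)) :=
      measurable_fst.div ((hp0m.comp measurable_snd).add
        (((hpm.comp measurable_snd).sub (hp0m.comp measurable_snd)).const_mul r))
    have hφ2m : Measurable fun zx : ℝ × 𝒳 =>
        (1 - zx.1) / (1 - (p0 zx.2 + r * (p zx.2 - p0 zx.2))) :=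
      (measurable_const.sub measurable_fst).div (measurable_const.sub
        ((hp0m.comp measurable_snd).add
          (((hpm.comp measurable_snd).sub (hp0m.comp measurable_snd)).const_mul r)))
    have tower1 : ∫ ω, (Z ω / (p0 (X ω) + r * (p (X ω) - p0 (X ω)))) * ((Y ω - g0 (Z ω) (X ω)) - θ0 * (D ω - m0 (Z ω) (X ω))) ∂P = 0 := by
      have t := myTower P (hZm.prodMk hXm) hφ1m huvi h3 hcuv
      simpa using t
    have tower2 : ∫ ω, ((1 - Z ω) / (1 - (p0 (X ω) + r * (p (X ω) - p0 (X ω))))) * ((Y ω - g0 (Z ω) (X ω)) - θ0 * (D ω - m0 (Z ω) (X ω))) ∂P = 0 := by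
      have t := myTower P (hZm.prodMk hXm) hφ2m huvi h4 hcuv
      simpa using t
    -- towers for c1, c0
    have hk1m : Measurable fun x : 𝒳 =>
        (g 1 x - g0 1 x - θ0 * (m 1 x - m0 1 x)) / (p0 x + r * (p x - p0 x)) :=
      ((hg1x.sub hg01x).sub ((hmm1x.sub hm01x).const_mul θ0)).div
        (hp0m.add ((hpm.sub hp0m).const_mul r))
    have hk0m : Measurable fun x : 𝒳 =>
        (g 0 x - g0 0 x - θ0 * (m 0 x - m0 0 x)) / (1 - (p0 x + r * (p x - p0 x))) :=
      ((hg0x.sub hg00x).sub ((hmm0x.sub hm00x).const_mul θ0)).div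
        (measurable_const.sub (hp0m.add ((hpm.sub hp0m).const_mul r)))
    have hIk1Z : Integrable (fun ω => (g 1 (X ω) - g0 1 (X ω) - θ0 * (m 1 (X ω) - m0 1 (X ω))) / (p0 (X ω) + r * (p (X ω) - p0 (X ω))) * Z ω) P := by
      refine (hc1i.abs.const_mul (1/ε)).mono'
        (((hc1m.div (hPRm r)).mul hZm).aestronglyMeasurable) ?_
      filter_upwards [hPRbd] with ω h
      rw [Real.norm_eq_abs, abs_mul, abs_div, abs_of_nonneg (by linarith [h.1] : (0:ℝ) ≤ (p0 (X ω) + r * (p (X ω) - p0 (X ω))))]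
      calc |(g 1 (X ω) - g0 1 (X ω) - θ0 * (m 1 (X ω) - m0 1 (X ω)))| / (p0 (X ω) + r * (p (X ω) - p0 (X ω))) * |Z ω| ≤ |(g 1 (X ω) - g0 1 (X ω) - θ0 * (m 1 (X ω) - m0 1 (X ω)))| / ε * 1 := by
            refine mul_le_mul (div_le_div_of_nonneg_left (abs_nonneg _) hε0 h.1) ?_
              (abs_nonneg _) (by positivity)
            have := habsZ ω; rwa [Real.norm_eq_abs] at this
        _ = 1/ε * |(g 1 (X ω) - g0 1 (X ω) - θ0 * (m 1 (X ω) - m0 1 (X ω)))| := by ring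
    have hIk0Z : Integrable (fun ω => (g 0 (X ω) - g0 0 (X ω) - θ0 * (m 0 (X ω) - m0 0 (X ω))) / (1 - (p0 (X ω) + r * (p (X ω) - p0 (X ω)))) * (1 - Z ω)) P := by
      refine (hc0i.abs.const_mul (1/ε)).mono'
        (((hc0m.div (measurable_const.sub (hPRm r))).mul
          (measurable_const.sub hZm)).aestronglyMeasurable) ?_
      filter_upwards [hPRbd] with ω h
      rw [Real.norm_eq_abs, abs_mul, abs_div,
        abs_of_nonneg (by linarith [h.2] : (0:ℝ) ≤ 1 - (p0 (X ω) + r * (p (X ω) - p0 (X ω))))]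
      calc |(g 0 (X ω) - g0 0 (X ω) - θ0 * (m 0 (X ω) - m0 0 (X ω)))| / (1 - (p0 (X ω) + r * (p (X ω) - p0 (X ω)))) * |1 - Z ω| ≤ |(g 0 (X ω) - g0 0 (X ω) - θ0 * (m 0 (X ω) - m0 0 (X ω)))| / ε * 1 := by
            refine mul_le_mul (div_le_div_of_nonneg_left (abs_nonneg _) hε0 (by linarith [h.2]))
              ?_ (abs_nonneg _) (by positivity)
            have := habs1Z ω; rwa [Real.norm_eq_abs] at this
        _ = 1/ε * |(g 0 (X ω) - g0 0 (X ω) - θ0 * (m 0 (X ω) - m0 0 (X ω)))| := by ring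
    have towerc1 : ∫ ω, (g 1 (X ω) - g0 1 (X ω) - θ0 * (m 1 (X ω) - m0 1 (X ω))) / (p0 (X ω) + r * (p (X ω) - p0 (X ω))) * Z ω ∂P = ∫ ω, (g 1 (X ω) - g0 1 (X ω) - θ0 * (m 1 (X ω) - m0 1 (X ω))) / (p0 (X ω) + r * (p (X ω) - p0 (X ω))) * p0 (X ω) ∂P :=
      myTower P hXm hk1m hZi hIk1Z hcZ
    have towerc0 : ∫ ω, (g 0 (X ω) - g0 0 (X ω) - θ0 * (m 0 (X ω) - m0 0 (X ω))) / (1 - (p0 (X ω) + r * (p (X ω) - p0 (X ω)))) * (1 - Z ω) ∂P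
        = ∫ ω, (g 0 (X ω) - g0 0 (X ω) - θ0 * (m 0 (X ω) - m0 0 (X ω))) / (1 - (p0 (X ω) + r * (p (X ω) - p0 (X ω)))) * (1 - p0 (X ω)) ∂P :=
      myTower P hXm hk0m h1Zi hIk0Z hcZ'
    have hTc1 : ∫ ω, (Z ω / (p0 (X ω) + r * (p (X ω) - p0 (X ω)))) * (g 1 (X ω) - g0 1 (X ω) - θ0 * (m 1 (X ω) - m0 1 (X ω))) ∂P
        = (∫ ω, (g 1 (X ω) - g0 1 (X ω) - θ0 * (m 1 (X ω) - m0 1 (X ω))) ∂P) - r * ∫ ω, (p (X ω) - p0 (X ω)) * (g 1 (X ω) - g0 1 (X ω) - θ0 * (m 1 (X ω) - m0 1 (X ω))) / (p0 (X ω) + r * (p (X ω) - p0 (X ω))) ∂P := by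
      calc ∫ ω, (Z ω / (p0 (X ω) + r * (p (X ω) - p0 (X ω)))) * (g 1 (X ω) - g0 1 (X ω) - θ0 * (m 1 (X ω) - m0 1 (X ω))) ∂P = ∫ ω, (g 1 (X ω) - g0 1 (X ω) - θ0 * (m 1 (X ω) - m0 1 (X ω))) / (p0 (X ω) + r * (p (X ω) - p0 (X ω))) * Z ω ∂P :=
            integral_congr_ae (.of_forall fun ω => by ring)
        _ = ∫ ω, (g 1 (X ω) - g0 1 (X ω) - θ0 * (m 1 (X ω) - m0 1 (X ω))) / (p0 (X ω) + r * (p (X ω) - p0 (X ω))) * p0 (X ω) ∂P := towerc1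
        _ = ∫ ω, ((g 1 (X ω) - g0 1 (X ω) - θ0 * (m 1 (X ω) - m0 1 (X ω))) - r * ((p (X ω) - p0 (X ω)) * (g 1 (X ω) - g0 1 (X ω) - θ0 * (m 1 (X ω) - m0 1 (X ω))) / (p0 (X ω) + r * (p (X ω) - p0 (X ω))))) ∂P := by
            refine integral_congr_ae ?_
            filter_upwards [hPRbd] with ω h
            have hne : (p0 (X ω) + r * (p (X ω) - p0 (X ω))) ≠ 0 := by linarith [h.1]
            field_simp
            ring
        _ = (∫ ω, (g 1 (X ω) - g0 1 (X ω) - θ0 * (m 1 (X ω) - m0 1 (X ω))) ∂P) - ∫ ω, r * ((p (X ω) - p0 (X ω)) * (g 1 (X ω) - g0 1 (X ω) - θ0 * (m 1 (X ω) - m0 1 (X ω))) / (p0 (X ω) + r * (p (X ω) - p0 (X ω)))) ∂P :=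
            integral_sub hc1i (hQc1PRi.const_mul r)
        _ = (∫ ω, (g 1 (X ω) - g0 1 (X ω) - θ0 * (m 1 (X ω) - m0 1 (X ω))) ∂P) - r * ∫ ω, (p (X ω) - p0 (X ω)) * (g 1 (X ω) - g0 1 (X ω) - θ0 * (m 1 (X ω) - m0 1 (X ω))) / (p0 (X ω) + r * (p (X ω) - p0 (X ω))) ∂P := by rw [integral_const_mul]
    have hTc0 : ∫ ω, ((1 - Z ω) / (1 - (p0 (X ω) + r * (p (X ω) - p0 (X ω))))) * (g 0 (X ω) - g0 0 (X ω) - θ0 * (m 0 (X ω) - m0 0 (X ω))) ∂P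
        = (∫ ω, (g 0 (X ω) - g0 0 (X ω) - θ0 * (m 0 (X ω) - m0 0 (X ω))) ∂P) + r * ∫ ω, (p (X ω) - p0 (X ω)) * (g 0 (X ω) - g0 0 (X ω) - θ0 * (m 0 (X ω) - m0 0 (X ω))) / (1 - (p0 (X ω) + r * (p (X ω) - p0 (X ω)))) ∂P := by
      calc ∫ ω, ((1 - Z ω) / (1 - (p0 (X ω) + r * (p (X ω) - p0 (X ω))))) * (g 0 (X ω) - g0 0 (X ω) - θ0 * (m 0 (X ω) - m0 0 (X ω))) ∂P = ∫ ω, (g 0 (X ω) - g0 0 (X ω) - θ0 * (m 0 (X ω) - m0 0 (X ω))) / (1 - (p0 (X ω) + r * (p (X ω) - p0 (X ω)))) * (1 - Z ω) ∂P :=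
            integral_congr_ae (.of_forall fun ω => by ring)
        _ = ∫ ω, (g 0 (X ω) - g0 0 (X ω) - θ0 * (m 0 (X ω) - m0 0 (X ω))) / (1 - (p0 (X ω) + r * (p (X ω) - p0 (X ω)))) * (1 - p0 (X ω)) ∂P := towerc0
        _ = ∫ ω, ((g 0 (X ω) - g0 0 (X ω) - θ0 * (m 0 (X ω) - m0 0 (X ω))) + r * ((p (X ω) - p0 (X ω)) * (g 0 (X ω) - g0 0 (X ω) - θ0 * (m 0 (X ω) - m0 0 (X ω))) / (1 - (p0 (X ω) + r * (p (X ω) - p0 (X ω)))))) ∂P := by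
            refine integral_congr_ae ?_
            filter_upwards [hPRbd] with ω h
            have hne : 1 - (p0 (X ω) + r * (p (X ω) - p0 (X ω))) ≠ 0 := by linarith [h.2]
            field_simp
            ring
        _ = (∫ ω, (g 0 (X ω) - g0 0 (X ω) - θ0 * (m 0 (X ω) - m0 0 (X ω))) ∂P) + ∫ ω, r * ((p (X ω) - p0 (X ω)) * (g 0 (X ω) - g0 0 (X ω) - θ0 * (m 0 (X ω) - m0 0 (X ω))) / (1 - (p0 (X ω) + r * (p (X ω) - p0 (X ω))))) ∂P :=
            integral_add hc0i (hQc0PRi.const_mul r)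
        _ = (∫ ω, (g 0 (X ω) - g0 0 (X ω) - θ0 * (m 0 (X ω) - m0 0 (X ω))) ∂P) + r * ∫ ω, (p (X ω) - p0 (X ω)) * (g 0 (X ω) - g0 0 (X ω) - θ0 * (m 0 (X ω) - m0 0 (X ω))) / (1 - (p0 (X ω) + r * (p (X ω) - p0 (X ω)))) ∂P := by rw [integral_const_mul]
    refine ⟨(∫ ω, (p (X ω) - p0 (X ω)) * (g 1 (X ω) - g0 1 (X ω) - θ0 * (m 1 (X ω) - m0 1 (X ω))) / (p0 (X ω) + r * (p (X ω) - p0 (X ω))) ∂P) + (∫ ω, (p (X ω) - p0 (X ω)) * (g 0 (X ω) - g0 0 (X ω) - θ0 * (m 0 (X ω) - m0 0 (X ω))) / (1 - (p0 (X ω) + r * (p (X ω) - p0 (X ω)))) ∂P), ?_, ?_⟩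
    · -- the bound
      have b1 : |(∫ ω, (p (X ω) - p0 (X ω)) * (g 1 (X ω) - g0 1 (X ω) - θ0 * (m 1 (X ω) - m0 1 (X ω))) / (p0 (X ω) + r * (p (X ω) - p0 (X ω))) ∂P)| ≤ 1/ε * (∫ ω, |(p (X ω) - p0 (X ω)) * (g 1 (X ω) - g0 1 (X ω) - θ0 * (m 1 (X ω) - m0 1 (X ω)))| ∂P) := by
        have hb := norm_integral_le_of_norm_le
          (f := fun ω => (p (X ω) - p0 (X ω)) * (g 1 (X ω) - g0 1 (X ω) - θ0 * (m 1 (X ω) - m0 1 (X ω))) / (p0 (X ω) + r * (p (X ω) - p0 (X ω)))) (hQc1i.abs.const_mul (1/ε)) ?_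
        · rw [integral_const_mul] at hb
          simpa [Real.norm_eq_abs] using hb
        · filter_upwards [hPRbd] with ω h
          rw [Real.norm_eq_abs, abs_div, abs_of_nonneg (by linarith [h.1] : (0:ℝ) ≤ (p0 (X ω) + r * (p (X ω) - p0 (X ω))))]
          calc |(p (X ω) - p0 (X ω)) * (g 1 (X ω) - g0 1 (X ω) - θ0 * (m 1 (X ω) - m0 1 (X ω)))| / (p0 (X ω) + r * (p (X ω) - p0 (X ω))) ≤ |(p (X ω) - p0 (X ω)) * (g 1 (X ω) - g0 1 (X ω) - θ0 * (m 1 (X ω) - m0 1 (X ω)))| / ε :=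
                div_le_div_of_nonneg_left (abs_nonneg _) hε0 h.1
            _ = 1/ε * |(p (X ω) - p0 (X ω)) * (g 1 (X ω) - g0 1 (X ω) - θ0 * (m 1 (X ω) - m0 1 (X ω)))| := by ring
      have b2 : |(∫ ω, (p (X ω) - p0 (X ω)) * (g 0 (X ω) - g0 0 (X ω) - θ0 * (m 0 (X ω) - m0 0 (X ω))) / (1 - (p0 (X ω) + r * (p (X ω) - p0 (X ω)))) ∂P)| ≤ 1/ε * (∫ ω, |(p (X ω) - p0 (X ω)) * (g 0 (X ω) - g0 0 (X ω) - θ0 * (m 0 (X ω) - m0 0 (X ω)))| ∂P) := by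
        have hb := norm_integral_le_of_norm_le
          (f := fun ω => (p (X ω) - p0 (X ω)) * (g 0 (X ω) - g0 0 (X ω) - θ0 * (m 0 (X ω) - m0 0 (X ω))) / (1 - (p0 (X ω) + r * (p (X ω) - p0 (X ω))))) (hQc0i.abs.const_mul (1/ε)) ?_
        · rw [integral_const_mul] at hb
          simpa [Real.norm_eq_abs] using hb
        · filter_upwards [hPRbd] with ω h
          rw [Real.norm_eq_abs, abs_div, abs_of_nonneg (by linarith [h.2] : (0:ℝ) ≤ 1 - (p0 (X ω) + r * (p (X ω) - p0 (X ω))))]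
          calc |(p (X ω) - p0 (X ω)) * (g 0 (X ω) - g0 0 (X ω) - θ0 * (m 0 (X ω) - m0 0 (X ω)))| / (1 - (p0 (X ω) + r * (p (X ω) - p0 (X ω)))) ≤ |(p (X ω) - p0 (X ω)) * (g 0 (X ω) - g0 0 (X ω) - θ0 * (m 0 (X ω) - m0 0 (X ω)))| / ε :=
                div_le_div_of_nonneg_left (abs_nonneg _) hε0 (by linarith [h.2])
            _ = 1/ε * |(p (X ω) - p0 (X ω)) * (g 0 (X ω) - g0 0 (X ω) - θ0 * (m 0 (X ω) - m0 0 (X ω)))| := by ring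
      calc |(∫ ω, (p (X ω) - p0 (X ω)) * (g 1 (X ω) - g0 1 (X ω) - θ0 * (m 1 (X ω) - m0 1 (X ω))) / (p0 (X ω) + r * (p (X ω) - p0 (X ω))) ∂P) + (∫ ω, (p (X ω) - p0 (X ω)) * (g 0 (X ω) - g0 0 (X ω) - θ0 * (m 0 (X ω) - m0 0 (X ω))) / (1 - (p0 (X ω) + r * (p (X ω) - p0 (X ω)))) ∂P)| ≤ |(∫ ω, (p (X ω) - p0 (X ω)) * (g 1 (X ω) - g0 1 (X ω) - θ0 * (m 1 (X ω) - m0 1 (X ω))) / (p0 (X ω) + r * (p (X ω) - p0 (X ω))) ∂P)| + |(∫ ω, (p (X ω) - p0 (X ω)) * (g 0 (X ω) - g0 0 (X ω) - θ0 * (m 0 (X ω) - m0 0 (X ω))) / (1 - (p0 (X ω) + r * (p (X ω) - p0 (X ω)))) ∂P)| := abs_add_le _ _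
        _ ≤ (1/ε * ((∫ ω, |(p (X ω) - p0 (X ω)) * (g 1 (X ω) - g0 1 (X ω) - θ0 * (m 1 (X ω) - m0 1 (X ω)))| ∂P) + (∫ ω, |(p (X ω) - p0 (X ω)) * (g 0 (X ω) - g0 0 (X ω) - θ0 * (m 0 (X ω) - m0 0 (X ω)))| ∂P))) := by rw [mul_add]; exact add_le_add b1 b2
    · -- the formula
      rw [hF r]
      rw [show (fun ω => ((g0 1 (X ω) + r * (g 1 (X ω) - g0 1 (X ω)))
          - (g0 0 (X ω) + r * (g 0 (X ω) - g0 0 (X ω)))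
          + Z ω * (Y ω - (g0 1 (X ω) + r * (g 1 (X ω) - g0 1 (X ω))))
              / (p0 (X ω) + r * (p (X ω) - p0 (X ω)))
          - (1 - Z ω) * (Y ω - (g0 0 (X ω) + r * (g 0 (X ω) - g0 0 (X ω))))
              / (1 - (p0 (X ω) + r * (p (X ω) - p0 (X ω))))
          - θ0 * ((m0 1 (X ω) + r * (m 1 (X ω) - m0 1 (X ω)))
              - (m0 0 (X ω) + r * (m 0 (X ω) - m0 0 (X ω)))
              + Z ω * (D ω - (m0 1 (X ω) + r * (m 1 (X ω) - m0 1 (X ω))))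
                  / (p0 (X ω) + r * (p (X ω) - p0 (X ω)))
              - (1 - Z ω) * (D ω - (m0 0 (X ω) + r * (m 0 (X ω) - m0 0 (X ω))))
                  / (1 - (p0 (X ω) + r * (p (X ω) - p0 (X ω))))))) = fun ω => (g0 1 (X ω) - g0 0 (X ω) - θ0 * (m0 1 (X ω) - m0 0 (X ω))) + r * ((g 1 (X ω) - g0 1 (X ω) - θ0 * (m 1 (X ω) - m0 1 (X ω))) - (g 0 (X ω) - g0 0 (X ω) - θ0 * (m 0 (X ω) - m0 0 (X ω)))) + (Z ω / (p0 (X ω) + r * (p (X ω) - p0 (X ω)))) * ((Y ω - g0 (Z ω) (X ω)) - θ0 * (D ω - m0 (Z ω) (X ω))) - ((1 - Z ω) / (1 - (p0 (X ω) + r * (p (X ω) - p0 (X ω))))) * ((Y ω - g0 (Z ω) (X ω)) - θ0 * (D ω - m0 (Z ω) (X ω))) - r * ((Z ω / (p0 (X ω) + r * (p (X ω) - p0 (X ω)))) * (g 1 (X ω) - g0 1 (X ω) - θ0 * (m 1 (X ω) - m0 1 (X ω)))) + r * (((1 - Z ω) / (1 - (p0 (X ω) + r * (p (X ω) - p0 (X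 ω))))) * (g 0 (X ω) - g0 0 (X ω) - θ0 * (m 0 (X ω) - m0 0 (X ω)))) from
        funext fun ω => by rcases hZval ω with hz|hz <;> rw [hz] <;> ring]
      have hT2 : Integrable (fun ω => (g0 1 (X ω) - g0 0 (X ω) - θ0 * (m0 1 (X ω) - m0 0 (X ω))) + r * ((g 1 (X ω) - g0 1 (X ω) - θ0 * (m 1 (X ω) - m0 1 (X ω))) - (g 0 (X ω) - g0 0 (X ω) - θ0 * (m 0 (X ω) - m0 0 (X ω))))) P := h1.add h2
      have hT3 : Integrable (fun ω => (g0 1 (X ω) - g0 0 (X ω) - θ0 * (m0 1 (X ω) - m0 0 (X ω))) + r * ((g 1 (X ω) - g0 1 (X ω) - θ0 * (m 1 (X ω) - m0 1 (X ω))) - (g 0 (X ω) - g0 0 (X ω) - θ0 * (m 0 (X ω) - m0 0 (X ω)))) + (Z ω / (p0 (X ω) + r * (p (X ω) - p0 (X ω)))) * ((Y ω - g0 (Z ω) (X ω)) - θ0 * (D ω - m0 (Z ω) (X ω)))) P := hT2.add h3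
      have hT4 : Integrable (fun ω => (g0 1 (X ω) - g0 0 (X ω) - θ0 * (m0 1 (X ω) - m0 0 (X ω))) + r * ((g 1 (X ω) - g0 1 (X ω) - θ0 * (m 1 (X ω) - m0 1 (X ω))) - (g 0 (X ω) - g0 0 (X ω) - θ0 * (m 0 (X ω) - m0 0 (X ω)))) + (Z ω / (p0 (X ω) + r * (p (X ω) - p0 (X ω)))) * ((Y ω - g0 (Z ω) (X ω)) - θ0 * (D ω - m0 (Z ω) (X ω))) - ((1 - Z ω) / (1 - (p0 (X ω) + r * (p (X ω) - p0 (X ω))))) * ((Y ω - g0 (Z ω) (X ω)) - θ0 * (D ω - m0 (Z ω) (X ω)))) P := hT3.sub h4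
      have hT5 : Integrable (fun ω => (g0 1 (X ω) - g0 0 (X ω) - θ0 * (m0 1 (X ω) - m0 0 (X ω))) + r * ((g 1 (X ω) - g0 1 (X ω) - θ0 * (m 1 (X ω) - m0 1 (X ω))) - (g 0 (X ω) - g0 0 (X ω) - θ0 * (m 0 (X ω) - m0 0 (X ω)))) + (Z ω / (p0 (X ω) + r * (p (X ω) - p0 (X ω)))) * ((Y ω - g0 (Z ω) (X ω)) - θ0 * (D ω - m0 (Z ω) (X ω))) - ((1 - Z ω) / (1 - (p0 (X ω) + r * (p (X ω) - p0 (X ω))))) * ((Y ω - g0 (Z ω) (X ω)) - θ0 * (D ω - m0 (Z ω) (X ω))) - r * ((Z ω / (p0 (X ω) + r * (p (X ω) - p0 (X ω)))) * (g 1 (X ω) - g0 1 (X ω) - θ0 * (m 1 (X ω) - m0 1 (X ω))))) P := hT4.sub h5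
      have e6 : ∫ ω, (g0 1 (X ω) - g0 0 (X ω) - θ0 * (m0 1 (X ω) - m0 0 (X ω))) + r * ((g 1 (X ω) - g0 1 (X ω) - θ0 * (m 1 (X ω) - m0 1 (X ω))) - (g 0 (X ω) - g0 0 (X ω) - θ0 * (m 0 (X ω) - m0 0 (X ω)))) + (Z ω / (p0 (X ω) + r * (p (X ω) - p0 (X ω)))) * ((Y ω - g0 (Z ω) (X ω)) - θ0 * (D ω - m0 (Z ω) (X ω))) - ((1 - Z ω) / (1 - (p0 (X ω) + r * (p (X ω) - p0 (X ω))))) * ((Y ω - g0 (Z ω) (X ω)) - θ0 * (D ω - m0 (Z ω) (X ω))) - r * ((Z ω / (p0 (X ω) + r * (p (X ω) - p0 (X ω)))) * (g 1 (X ω) - g0 1 (X ω) - θ0 * (m 1 (X ω) - m0 1 (X ω)))) + r * (((1 - Z ω) / (1 - (p0 (X ω) + r * (p (X ω) - p0 (X ω))))) * (g 0 (X ω) - g0 0 (X ω) - θ0 * (m 0 (X ω) - m0 0 (X ω)))) ∂P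
          = (∫ ω, (g0 1 (X ω) - g0 0 (X ω) - θ0 * (m0 1 (X ω) - m0 0 (X ω))) + r * ((g 1 (X ω) - g0 1 (X ω) - θ0 * (m 1 (X ω) - m0 1 (X ω))) - (g 0 (X ω) - g0 0 (X ω) - θ0 * (m 0 (X ω) - m0 0 (X ω)))) + (Z ω / (p0 (X ω) + r * (p (X ω) - p0 (X ω)))) * ((Y ω - g0 (Z ω) (X ω)) - θ0 * (D ω - m0 (Z ω) (X ω))) - ((1 - Z ω) / (1 - (p0 (X ω) + r * (p (X ω) - p0 (X ω))))) * ((Y ω - g0 (Z ω) (X ω)) - θ0 * (D ω - m0 (Z ω) (X ω))) - r * ((Z ω / (p0 (X ω) + r * (p (X ω) - p0 (X ω)))) * (g 1 (X ω) - g0 1 (X ω) - θ0 * (m 1 (X ω) - m0 1 (X ω)))) ∂P) + ∫ ω, r * (((1 - Z ω) / (1 - (p0 (X ω) + r * (p (X ω) - p0 (X ω))))) * (g 0 (X ω) - g0 0 (X ω) - θ0 * (m 0 (X ω) - m0 0 (X ω)))) ∂P := integral_add hT5 h6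
      have e5 : ∫ ω, (g0 1 (X ω) - g0 0 (X ω) - θ0 * (m0 1 (X ω) - m0 0 (X ω))) + r * ((g 1 (X ω) - g0 1 (X ω) - θ0 * (m 1 (X ω) - m0 1 (X ω))) - (g 0 (X ω) - g0 0 (X ω) - θ0 * (m 0 (X ω) - m0 0 (X ω)))) + (Z ω / (p0 (X ω) + r * (p (X ω) - p0 (X ω)))) * ((Y ω - g0 (Z ω) (X ω)) - θ0 * (D ω - m0 (Z ω) (X ω))) - ((1 - Z ω) / (1 - (p0 (X ω) + r * (p (X ω) - p0 (X ω))))) * ((Y ω - g0 (Z ω) (X ω)) - θ0 * (D ω - m0 (Z ω) (X ω))) - r * ((Z ω / (p0 (X ω) + r * (p (X ω) - p0 (X ω)))) * (g 1 (X ω) - g0 1 (X ω) - θ0 * (m 1 (X ω) - m0 1 (X ω)))) ∂P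
          = (∫ ω, (g0 1 (X ω) - g0 0 (X ω) - θ0 * (m0 1 (X ω) - m0 0 (X ω))) + r * ((g 1 (X ω) - g0 1 (X ω) - θ0 * (m 1 (X ω) - m0 1 (X ω))) - (g 0 (X ω) - g0 0 (X ω) - θ0 * (m 0 (X ω) - m0 0 (X ω)))) + (Z ω / (p0 (X ω) + r * (p (X ω) - p0 (X ω)))) * ((Y ω - g0 (Z ω) (X ω)) - θ0 * (D ω - m0 (Z ω) (X ω))) - ((1 - Z ω) / (1 - (p0 (X ω) + r * (p (X ω) - p0 (X ω))))) * ((Y ω - g0 (Z ω) (X ω)) - θ0 * (D ω - m0 (Z ω) (X ω))) ∂P) - ∫ ω, r * ((Z ω / (p0 (X ω) + r * (p (X ω) - p0 (X ω)))) * (g 1 (X ω) - g0 1 (X ω) - θ0 * (m 1 (X ω) - m0 1 (X ω)))) ∂P := integral_sub hT4 h5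
      have e4 : ∫ ω, (g0 1 (X ω) - g0 0 (X ω) - θ0 * (m0 1 (X ω) - m0 0 (X ω))) + r * ((g 1 (X ω) - g0 1 (X ω) - θ0 * (m 1 (X ω) - m0 1 (X ω))) - (g 0 (X ω) - g0 0 (X ω) - θ0 * (m 0 (X ω) - m0 0 (X ω)))) + (Z ω / (p0 (X ω) + r * (p (X ω) - p0 (X ω)))) * ((Y ω - g0 (Z ω) (X ω)) - θ0 * (D ω - m0 (Z ω) (X ω))) - ((1 - Z ω) / (1 - (p0 (X ω) + r * (p (X ω) - p0 (X ω))))) * ((Y ω - g0 (Z ω) (X ω)) - θ0 * (D ω - m0 (Z ω) (X ω))) ∂P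
          = (∫ ω, (g0 1 (X ω) - g0 0 (X ω) - θ0 * (m0 1 (X ω) - m0 0 (X ω))) + r * ((g 1 (X ω) - g0 1 (X ω) - θ0 * (m 1 (X ω) - m0 1 (X ω))) - (g 0 (X ω) - g0 0 (X ω) - θ0 * (m 0 (X ω) - m0 0 (X ω)))) + (Z ω / (p0 (X ω) + r * (p (X ω) - p0 (X ω)))) * ((Y ω - g0 (Z ω) (X ω)) - θ0 * (D ω - m0 (Z ω) (X ω))) ∂P) - ∫ ω, ((1 - Z ω) / (1 - (p0 (X ω) + r * (p (X ω) - p0 (X ω))))) * ((Y ω - g0 (Z ω) (X ω)) - θ0 * (D ω - m0 (Z ω) (X ω))) ∂P := integral_sub hT3 h4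
      have e3 : ∫ ω, (g0 1 (X ω) - g0 0 (X ω) - θ0 * (m0 1 (X ω) - m0 0 (X ω))) + r * ((g 1 (X ω) - g0 1 (X ω) - θ0 * (m 1 (X ω) - m0 1 (X ω))) - (g 0 (X ω) - g0 0 (X ω) - θ0 * (m 0 (X ω) - m0 0 (X ω)))) + (Z ω / (p0 (X ω) + r * (p (X ω) - p0 (X ω)))) * ((Y ω - g0 (Z ω) (X ω)) - θ0 * (D ω - m0 (Z ω) (X ω))) ∂P
          = (∫ ω, (g0 1 (X ω) - g0 0 (X ω) - θ0 * (m0 1 (X ω) - m0 0 (X ω))) + r * ((g 1 (X ω) - g0 1 (X ω) - θ0 * (m 1 (X ω) - m0 1 (X ω))) - (g 0 (X ω) - g0 0 (X ω) - θ0 * (m 0 (X ω) - m0 0 (X ω)))) ∂P) + ∫ ω, (Z ω / (p0 (X ω) + r * (p (X ω) - p0 (X ω)))) * ((Y ω - g0 (Z ω) (X ω)) - θ0 * (D ω - m0 (Z ω) (X ω))) ∂P := integral_add hT2 h3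
      have e2 : ∫ ω, (g0 1 (X ω) - g0 0 (X ω) - θ0 * (m0 1 (X ω) - m0 0 (X ω))) + r * ((g 1 (X ω) - g0 1 (X ω) - θ0 * (m 1 (X ω) - m0 1 (X ω))) - (g 0 (X ω) - g0 0 (X ω) - θ0 * (m 0 (X ω) - m0 0 (X ω)))) ∂P
          = (∫ ω, (g0 1 (X ω) - g0 0 (X ω) - θ0 * (m0 1 (X ω) - m0 0 (X ω))) ∂P) + ∫ ω, r * ((g 1 (X ω) - g0 1 (X ω) - θ0 * (m 1 (X ω) - m0 1 (X ω))) - (g 0 (X ω) - g0 0 (X ω) - θ0 * (m 0 (X ω) - m0 0 (X ω)))) ∂P := integral_add h1 h2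
      have em1 : ∫ ω, r * ((g 1 (X ω) - g0 1 (X ω) - θ0 * (m 1 (X ω) - m0 1 (X ω))) - (g 0 (X ω) - g0 0 (X ω) - θ0 * (m 0 (X ω) - m0 0 (X ω)))) ∂P = r * ∫ ω, (g 1 (X ω) - g0 1 (X ω) - θ0 * (m 1 (X ω) - m0 1 (X ω))) - (g 0 (X ω) - g0 0 (X ω) - θ0 * (m 0 (X ω) - m0 0 (X ω))) ∂P :=
        integral_const_mul r _
      have em2 : ∫ ω, r * ((Z ω / (p0 (X ω) + r * (p (X ω) - p0 (X ω)))) * (g 1 (X ω) - g0 1 (X ω) - θ0 * (m 1 (X ω) - m0 1 (X ω)))) ∂P = r * ∫ ω, (Z ω / (p0 (X ω) + r * (p (X ω) - p0 (X ω)))) * (g 1 (X ω) - g0 1 (X ω) - θ0 * (m 1 (X ω) - m0 1 (X ω))) ∂P :=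
        integral_const_mul r _
      have em3 : ∫ ω, r * (((1 - Z ω) / (1 - (p0 (X ω) + r * (p (X ω) - p0 (X ω))))) * (g 0 (X ω) - g0 0 (X ω) - θ0 * (m 0 (X ω) - m0 0 (X ω)))) ∂P = r * ∫ ω, ((1 - Z ω) / (1 - (p0 (X ω) + r * (p (X ω) - p0 (X ω))))) * (g 0 (X ω) - g0 0 (X ω) - θ0 * (m 0 (X ω) - m0 0 (X ω))) ∂P :=
        integral_const_mul r _
      have esub : ∫ ω, (g 1 (X ω) - g0 1 (X ω) - θ0 * (m 1 (X ω) - m0 1 (X ω))) - (g 0 (X ω) - g0 0 (X ω) - θ0 * (m 0 (X ω) - m0 0 (X ω))) ∂P = (∫ ω, (g 1 (X ω) - g0 1 (X ω) - θ0 * (m 1 (X ω) - m0 1 (X ω))) ∂P) - ∫ ω, (g 0 (X ω) - g0 0 (X ω) - θ0 * (m 0 (X ω) - m0 0 (X ω))) ∂P :=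
        integral_sub hc1i hc0i
      rw [e6, e5, e4, e3, e2, em1, em2, em3, esub, tower1, tower2, hTc1, hTc0]
      ring
  -- conclude
  have hF0 : F 0 = (∫ ω, (g0 1 (X ω) - g0 0 (X ω) - θ0 * (m0 1 (X ω) - m0 0 (X ω))) ∂P) := by
    obtain ⟨E, _, hE⟩ := key 0 (Set.mem_Ico.mpr ⟨le_rfl, one_pos⟩)
    simpa using hE
  have hM0 : 0 ≤ (1/ε * ((∫ ω, |(p (X ω) - p0 (X ω)) * (g 1 (X ω) - g0 1 (X ω) - θ0 * (m 1 (X ω) - m0 1 (X ω)))| ∂P) + (∫ ω, |(p (X ω) - p0 (X ω)) * (g 0 (X ω) - g0 0 (X ω) - θ0 * (m 0 (X ω) - m0 0 (X ω)))| ∂P))) := by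
    have i1 : 0 ≤ (∫ ω, |(p (X ω) - p0 (X ω)) * (g 1 (X ω) - g0 1 (X ω) - θ0 * (m 1 (X ω) - m0 1 (X ω)))| ∂P) := integral_nonneg fun ω => abs_nonneg _
    have i2 : 0 ≤ (∫ ω, |(p (X ω) - p0 (X ω)) * (g 0 (X ω) - g0 0 (X ω) - θ0 * (m 0 (X ω) - m0 0 (X ω)))| ∂P) := integral_nonneg fun ω => abs_nonneg _
    positivity
  rw [hasDerivWithinAt_iff_isLittleO]
  simp only [smul_zero, sub_zero]
  rw [Asymptotics.isLittleO_iff]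
  intro c hc
  have hd : (0:ℝ) < c / ((1/ε * ((∫ ω, |(p (X ω) - p0 (X ω)) * (g 1 (X ω) - g0 1 (X ω) - θ0 * (m 1 (X ω) - m0 1 (X ω)))| ∂P) + (∫ ω, |(p (X ω) - p0 (X ω)) * (g 0 (X ω) - g0 0 (X ω) - θ0 * (m 0 (X ω) - m0 0 (X ω)))| ∂P))) + 1) := div_pos hc (by linarith)
  filter_upwards [eventually_mem_nhdsWithin,
    (eventually_abs_sub_lt 0 hd).filter_mono nhdsWithin_le_nhds] with x hxs hxlt
  obtain ⟨E, hEb, hEq⟩ := key x hxs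
  have hx0 : 0 ≤ x := hxs.1
  have hxc : x * ((1/ε * ((∫ ω, |(p (X ω) - p0 (X ω)) * (g 1 (X ω) - g0 1 (X ω) - θ0 * (m 1 (X ω) - m0 1 (X ω)))| ∂P) + (∫ ω, |(p (X ω) - p0 (X ω)) * (g 0 (X ω) - g0 0 (X ω) - θ0 * (m 0 (X ω) - m0 0 (X ω)))| ∂P))) + 1) < c := by
    rw [sub_zero, abs_of_nonneg hx0] at hxlt
    rw [← lt_div_iff₀ (by linarith : (0:ℝ) < (1/ε * ((∫ ω, |(p (X ω) - p0 (X ω)) * (g 1 (X ω) - g0 1 (X ω) - θ0 * (m 1 (X ω) - m0 1 (X ω)))| ∂P) + (∫ ω, |(p (X ω) - p0 (X ω)) * (g 0 (X ω) - g0 0 (X ω) - θ0 * (m 0 (X ω) - m0 0 (X ω)))| ∂P))) + 1)]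
    exact hxlt
  have key2 : |F x - F 0| ≤ x^2 * ((1/ε * ((∫ ω, |(p (X ω) - p0 (X ω)) * (g 1 (X ω) - g0 1 (X ω) - θ0 * (m 1 (X ω) - m0 1 (X ω)))| ∂P) + (∫ ω, |(p (X ω) - p0 (X ω)) * (g 0 (X ω) - g0 0 (X ω) - θ0 * (m 0 (X ω) - m0 0 (X ω)))| ∂P)))) := by
    rw [hEq, hF0, show (∫ ω, (g0 1 (X ω) - g0 0 (X ω) - θ0 * (m0 1 (X ω) - m0 0 (X ω))) ∂P) + x^2*E - (∫ ω, (g0 1 (X ω) - g0 0 (X ω) - θ0 * (m0 1 (X ω) - m0 0 (X ω))) ∂P) = x^2 * E from by ring, abs_mul,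
      abs_of_nonneg (sq_nonneg x)]
    exact mul_le_mul_of_nonneg_left hEb (sq_nonneg x)
  rw [Real.norm_eq_abs, Real.norm_eq_abs, abs_of_nonneg hx0]
  nlinarith [key2, mul_le_mul_of_nonneg_left hxc.le hx0, sq_nonneg x, hM0]
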